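/- arXiv:1404.3494 — 6 statements merged into one kernel-verified Lean document; each statement's English description precedes it below -/
import Mathlib

section
/- Let R be a commutative ring with identity and let F be a polynomial in one variable over R. Then there exists a sequence of multivariate polynomials (f_m)_{m≥0}, with f_m ∈ R[x_1,…,x_m], such that f_0 = 1, f_1(x_1) = F(x_1), and for every m ≥ 1 the polynomial identity F(∑_{k=1}^m x_k · f_{k-1}(x_1,…,x_{k-1})) = f_{m-1}(x_1,…,x_{m-1}) · f_m(x_1,…,x_m) holds in R[x_1,…,x_m]. -/
noncomputable def auxState (R : Type*) [CommRing R] (F : Polynomial R) (G : MvPolynomial Bool R) :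
    ℕ → MvPolynomial ℕ R × MvPolynomial ℕ R × MvPolynomial ℕ R
  | 0 => (MvPolynomial.X 0, 1, Polynomial.aeval (MvPolynomial.X 0) F)
  | (m+1) =>
    let p := auxState R F G m
    (p.1 + MvPolynomial.X (m+1) * p.2.2, p.2.2,
     p.2.1 + MvPolynomial.X (m+1) *
       MvPolynomial.aeval (fun b : Bool => if b then MvPolynomial.X (m+1) * p.2.2 else p.1) G)

theorem auxState_succ (R : Type*) [CommRing R] (F : Polynomial R) (G : MvPolynomial Bool R)
    (m : ℕ) :
    auxState R F G (m+1) =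
      ((auxState R F G m).1 + MvPolynomial.X (m+1) * (auxState R F G m).2.2,
       (auxState R F G m).2.2,
       (auxState R F G m).2.1 + MvPolynomial.X (m+1) *
         MvPolynomial.aeval
           (fun b : Bool => if b then MvPolynomial.X (m+1) * (auxState R F G m).2.2
             else (auxState R F G m).1) G) := rfl

/-- Let `R` be a commutative ring with identity and let `F` be a
polynomial in one variable over `R`. There exists a sequence of multivariate
polynomials `(f m)`, with `f m` using only the variables `x_1, …, x_m`
(here indexed `0, …, m-1`), such that `f 0 = 1`, `f 1 = F(x_1)`, and for every
`m ≥ 1`, `F (∑_{k=1}^m x_k · f_{k-1}) = f_{m-1} · f_m` in `R[x_1,…,x_m]`. -/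
theorem stmt_0 (R : Type*) [CommRing R] (F : Polynomial R) :
    ∃ f : ℕ → MvPolynomial ℕ R,
      (∀ m : ℕ, f m ∈ MvPolynomial.supported R {i : ℕ | i < m}) ∧
      f 0 = 1 ∧
      f 1 = Polynomial.aeval (MvPolynomial.X 0) F ∧
      ∀ m : ℕ, 1 ≤ m →
        Polynomial.aeval (∑ k ∈ Finset.range m, MvPolynomial.X k * f k) F
          = f (m - 1) * f m := by
  classical
  -- the universal difference quotient `G` with `F(Y+T) = F(Y) + T·G(Y,T)`
  obtain ⟨G, hG⟩ : ∃ G : MvPolynomial Bool R,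
      Polynomial.aeval (MvPolynomial.X false + MvPolynomial.X true : MvPolynomial Bool R) F
        = Polynomial.aeval (MvPolynomial.X false : MvPolynomial Bool R) F
          + MvPolynomial.X true * G := by
    have h := Polynomial.sub_dvd_eval_sub
      (MvPolynomial.X false + MvPolynomial.X true) (MvPolynomial.X false)
      (F.map (algebraMap R (MvPolynomial Bool R)))
    rw [add_sub_cancel_left] at h
    obtain ⟨G, hG⟩ := h
    refine ⟨G, ?_⟩
    have e : ∀ x : MvPolynomial Bool R,
        Polynomial.aeval x F = (F.map (algebraMap R (MvPolynomial Bool R))).eval x := by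
      intro x; rw [Polynomial.aeval_def, Polynomial.eval_map]
    rw [e, e]
    linear_combination hG
  -- specialization of `hG`
  have key : ∀ a t : MvPolynomial ℕ R,
      Polynomial.aeval (a + t) F
        = Polynomial.aeval a F
          + t * MvPolynomial.aeval (fun b : Bool => if b then t else a) G := by
    intro a t
    have h := congrArg (MvPolynomial.aeval (R := R) (fun b : Bool => if b then t else a)) hG
    simp only [map_add, map_mul, MvPolynomial.aeval_X,
      ← Polynomial.aeval_algHom_apply] at h
    simpa using h
  -- membership lemmas for `supported`
  have memS : ∀ (s : Set ℕ) (g : Bool → MvPolynomial ℕ R),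
      (∀ b, g b ∈ MvPolynomial.supported R s) →
      ∀ p : MvPolynomial Bool R, MvPolynomial.aeval g p ∈ MvPolynomial.supported R s := by
    intro s g hg p
    induction p using MvPolynomial.induction_on with
    | C r => simpa using Subalgebra.algebraMap_mem (MvPolynomial.supported R s) r
    | add p q hp hq => rw [map_add]; exact Subalgebra.add_mem _ hp hq
    | mul_X p i hp => rw [map_mul, MvPolynomial.aeval_X]; exact Subalgebra.mul_mem _ hp (hg i)
  have memP : ∀ (s : Set ℕ) (x : MvPolynomial ℕ R), x ∈ MvPolynomial.supported R s →
      Polynomial.aeval x F ∈ MvPolynomial.supported R s := by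
    intro s x hx
    refine Algebra.adjoin_le ?_ (Polynomial.aeval_mem_adjoin_singleton R x)
    simpa using hx
  have memX : ∀ (s : Set ℕ) (i : ℕ), i ∈ s → (MvPolynomial.X i : MvPolynomial ℕ R) ∈
      MvPolynomial.supported R s := by
    intro s i hi
    exact Algebra.subset_adjoin ⟨i, hi, rfl⟩
  set st := auxState R F G with hst
  -- invariant
  have inv : ∀ m : ℕ,
      ((st m).1 = ∑ k ∈ Finset.range (m+1), MvPolynomial.X k * (st k).2.1)
      ∧ Polynomial.aeval (st m).1 F = (st m).2.1 * (st m).2.2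
      ∧ (st m).1 ∈ MvPolynomial.supported R {i | i < m+1}
      ∧ (st m).2.1 ∈ MvPolynomial.supported R {i | i < m}
      ∧ (st m).2.2 ∈ MvPolynomial.supported R {i | i < m+1} := by
    intro m
    induction m with
    | zero =>
      refine ⟨by simp [hst, auxState], by simp [hst, auxState], ?_, ?_, ?_⟩
      · exact memX _ 0 (by simp)
      · exact Subalgebra.one_mem _
      · exact memP _ _ (memX _ 0 (by simp))
    | succ m ih =>
      obtain ⟨ih1, ih2, ih3, ih4, ih5⟩ := ih
      have hstep := auxState_succ R F G m
      rw [← hst] at hstep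
      set a := (st m).1
      set p := (st m).2.1
      set q := (st m).2.2
      set c := MvPolynomial.aeval
        (fun b : Bool => if b then MvPolynomial.X (m+1) * q else a) G with hc
      have h1 : (st (m+1)).1 = a + MvPolynomial.X (m+1) * q := by rw [hstep]
      have h2 : (st (m+1)).2.1 = q := by rw [hstep]
      have h3 : (st (m+1)).2.2 = p + MvPolynomial.X (m+1) * c := by rw [hstep]
      have hmono : MvPolynomial.supported R {i | i < m+1} ≤
          MvPolynomial.supported R {i | i < m+2} :=
        MvPolynomial.supported_mono (by intro i hi; exact Nat.lt_succ_of_lt hi)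
      have hXm : (MvPolynomial.X (m+1) : MvPolynomial ℕ R) ∈
          MvPolynomial.supported R {i | i < m+2} := memX _ _ (by simp)
      have hcmem : c ∈ MvPolynomial.supported R {i | i < m+2} := by
        refine memS _ _ ?_ G
        intro b
        cases b
        · simpa using hmono ih3
        · simpa using Subalgebra.mul_mem _ hXm (hmono ih5)
      refine ⟨?_, ?_, ?_, ?_, ?_⟩
      · rw [Finset.sum_range_succ, ← ih1, h1, h2]
      · rw [h1, h2, h3, key a (MvPolynomial.X (m+1) * q), ih2, ← hc]
        ring
      · rw [h1]
        exact Subalgebra.add_mem _ (hmono ih3) (Subalgebra.mul_mem _ hXm (hmono ih5))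
      · rw [h2]; exact ih5
      · rw [h3]
        refine Subalgebra.add_mem _ ?_ (Subalgebra.mul_mem _ hXm hcmem)
        exact hmono (MvPolynomial.supported_mono
          (by intro i hi; exact Nat.lt_succ_of_lt hi) ih4)
  refine ⟨fun m => (st m).2.1, fun m => (inv m).2.2.2.1, ?_, ?_, ?_⟩
  · simp [hst, auxState]
  · simp [hst, auxState]
  · intro m hm
    obtain ⟨n, rfl⟩ : ∃ n, m = n + 1 := ⟨m - 1, by omega⟩
    have h2 : (st (n+1)).2.1 = (st n).2.2 := by rw [hst, auxState_succ]
    rw [← (inv n).1, (inv n).2.1]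
    simp only [Nat.add_sub_cancel]
    rw [h2]
end

section
/- Let R be a commutative ring with identity, a, b, c ∈ R, and F(z) = a z² + b z + c. Define multivariate polynomials f_0 = 1, f_1(x_1) = F(x_1) = a x_1² + b x_1 + c, and for m ≥ 2, f_m = f_{m-2} + x_m · (∂f_{m-1}/∂x_{m-1}) + a · x_m² · f_{m-1} in R[x_1,…,x_m]. Then for every m ≥ 1, F(∑_{k=1}^m x_k · f_{k-1}(x_1,…,x_{k-1})) = f_{m-1} · f_m as an identity in R[x_1,…,x_m]. -/
open MvPolynomial in
lemma my_pderiv_comm {R : Type*} [CommRing R] (i j : ℕ) (p : MvPolynomial ℕ R) :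
    pderiv i (pderiv j p) = pderiv j (pderiv i p) := by
  induction p using MvPolynomial.induction_on with
  | C a => simp
  | add p q hp hq => simp [hp, hq]
  | mul_X p n hp =>
    simp only [pderiv_mul, map_add, hp]
    by_cases h1 : n = i <;> by_cases h2 : n = j <;>
      subst_vars <;> simp_all [pderiv_X_self, pderiv_X_of_ne]

open MvPolynomial in
/-- Let `R` be a commutative ring, `a b c ∈ R`, and
`F(z) = a z² + b z + c`.  Define `f 0 = 1`, `f 1 = F(x_1)`, and for `m ≥ 2`
`f m = f (m-2) + x_m · ∂f_{m-1}/∂x_{m-1} + a · x_m² · f_{m-1}`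
(variables `x_j` are indexed by `j - 1`).  Then for every `m ≥ 1`,
`F (∑_{k=1}^m x_k · f_{k-1}) = f_{m-1} · f_m` in `R[x_1,…,x_m]`. -/
theorem stmt_1 (R : Type*) [CommRing R] (a b c : R) (f : ℕ → MvPolynomial ℕ R)
    (h0 : f 0 = 1)
    (h1 : f 1 = C a * X 0 ^ 2 + C b * X 0 + C c)
    (hrec : ∀ m : ℕ, 2 ≤ m →
      f m = f (m - 2) + X (m - 1) * (pderiv (m - 2) (f (m - 1)))
              + C a * X (m - 1) ^ 2 * f (m - 1)) :
    ∀ m : ℕ, 1 ≤ m →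
      C a * (∑ k ∈ Finset.range m, X k * f k) ^ 2
          + C b * (∑ k ∈ Finset.range m, X k * f k) + C c
        = f (m - 1) * f m := by
  -- vanishing of high partial derivatives
  have hvars : ∀ m : ℕ, ∀ i : ℕ, m ≤ i → pderiv i (f m) = 0 := by
    intro m
    induction m using Nat.strong_induction_on with
    | _ m ih =>
      match m with
      | 0 => intro i _; simp [h0]
      | 1 =>
        intro i hi
        have hne : (0 : ℕ) ≠ i := by omega
        simp [h1, pderiv_mul, pderiv_pow, pderiv_X_of_ne hne]
      | (m + 2) =>
        intro i hi
        rw [hrec (m + 2) (by omega)]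
        have e2 : m + 2 - 2 = m := rfl
        have e1 : m + 2 - 1 = m + 1 := rfl
        rw [e2, e1]
        have hXne : (m + 1 : ℕ) ≠ i := by omega
        have hf1 : pderiv i (f (m + 1)) = 0 := ih (m + 1) (by omega) i (by omega)
        have hf2 : pderiv i (f m) = 0 := ih m (by omega) i (by omega)
        have hdd : pderiv i (pderiv m (f (m + 1))) = 0 := by
          rw [my_pderiv_comm, hf1, map_zero]
        simp [pderiv_mul, pderiv_pow, pderiv_X_of_ne hXne, pderiv_C_mul,
          hf1, hf2, hdd]
  -- the derivative identity
  have hD : ∀ m : ℕ, 1 ≤ m →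
      pderiv (m - 1) (f m)
        = 2 * C a * (∑ k ∈ Finset.range m, X k * f k) + C b := by
    intro m hm
    induction m, hm using Nat.le_induction with
    | base =>
      simp [h1, h0, pderiv_mul, pderiv_pow, map_mul]
      ring
    | succ m hm ih =>
      have e1 : m + 1 - 1 = m := rfl
      have e2 : m + 1 - 2 = m - 1 := rfl
      rw [e1, hrec (m + 1) (by omega), e1, e2]
      have h1' : pderiv m (f (m - 1)) = 0 := hvars (m - 1) m (by omega)
      have h2' : pderiv m (pderiv (m - 1) (f m)) = 0 := by
        rw [my_pderiv_comm, hvars m m le_rfl, map_zero]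
      have h3' : pderiv m (f m) = 0 := hvars m m le_rfl
      have hS : pderiv m (∑ k ∈ Finset.range m, X k * f k) = 0 := by
        rw [map_sum]
        refine Finset.sum_eq_zero fun k hk => ?_
        have hk' : k < m := Finset.mem_range.mp hk
        rw [pderiv_mul, pderiv_X_of_ne (by omega), hvars k m (by omega)]
        ring
      have h4' : pderiv m (2 : MvPolynomial ℕ R) = 0 := by
        rw [show (2 : MvPolynomial ℕ R) = C 2 from (map_ofNat C 2).symm]; exact pderiv_C
      rw [Finset.sum_range_succ]
      simp only [map_add, pderiv_mul, pderiv_pow, pderiv_C_mul, pderiv_X_self,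
        h1', h2', h3', h4', hS, ih, pderiv_C, mul_zero, zero_mul, add_zero, zero_add,
        mul_one, one_mul, pow_one]
      ring
  -- main induction
  intro m hm
  induction m, hm using Nat.le_induction with
  | base =>
    simp [h0, h1]
  | succ m hm ih =>
    have e1 : m + 1 - 1 = m := rfl
    have e2 : m + 1 - 2 = m - 1 := rfl
    rw [e1, hrec (m + 1) (by omega), e1, e2, hD m hm, Finset.sum_range_succ]
    linear_combination ih
end

section
/- Let F be a recursively-factorable polynomial with integer coefficients. Then for every n ∈ ℤ and every natural number p with p ∣ F(n), there exist m ≥ 1, integers x_1,…,x_m, and integers g_0, g_1,…,g_m with g_0 = 1, such that for every k with 1 ≤ k ≤ m, F(∑_{j=1}^k x_j · g_{j-1}) = g_{k-1} · g_k, and moreover n = ∑_{j=1}^m x_j · g_{j-1} and p = |g_m|. -/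
/-- A polynomial `F` with integer coefficients is *recursively-factorable* if for every
`n ∈ ℤ` and all integers `p, q` with `F(n) = p·q`, `|p| ≠ 1` and `|q| ≠ 1`, there exists
`r ∈ ℤ` with `|F(r)| < |F(n)|` and `r ≡ n (mod |p|)` or `r ≡ n (mod |q|)` (congruence
mod 0 meaning equality, which is exactly divisibility of `r - n` by `p` resp. `q`). -/
def RecursivelyFactorable (F : Polynomial ℤ) : Prop :=
  ∀ n p q : ℤ, F.eval n = p * q → |p| ≠ 1 → |q| ≠ 1 →
    ∃ r : ℤ, |F.eval r| < |F.eval n| ∧ (p ∣ (r - n) ∨ q ∣ (r - n))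

lemma extend_chain (F : Polynomial ℤ) (m : ℕ) (x g : ℕ → ℤ)
    (hg0 : g 0 = 1)
    (hchain : ∀ k, 1 ≤ k → k ≤ m →
      F.eval (∑ j ∈ Finset.range k, x (j+1) * g j) = g (k-1) * g k)
    (v w : ℤ)
    (hnew : F.eval ((∑ j ∈ Finset.range m, x (j+1) * g j) + v * g m) = g m * w) :
    ∃ x' g' : ℕ → ℤ, g' 0 = 1 ∧
      (∀ k, 1 ≤ k → k ≤ m + 1 →
        F.eval (∑ j ∈ Finset.range k, x' (j+1) * g' j) = g' (k-1) * g' k) ∧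
      (∑ j ∈ Finset.range (m+1), x' (j+1) * g' j)
        = (∑ j ∈ Finset.range m, x (j+1) * g j) + v * g m ∧
      g' (m + 1) = w := by
  refine ⟨Function.update x (m+1) v, Function.update g (m+1) w, ?_, ?_, ?_, ?_⟩
  case _ => rw [Function.update_of_ne (by omega)]; exact hg0
  all_goals {
    have hs : ∀ k, k ≤ m → (∑ j ∈ Finset.range k,
        (Function.update x (m+1) v) (j+1) * (Function.update g (m+1) w) j)
        = ∑ j ∈ Finset.range k, x (j+1) * g j := by
      intro k hk
      apply Finset.sum_congr rfl
      intro j hj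
      have hj' : j < k := Finset.mem_range.mp hj
      rw [Function.update_of_ne (by omega), Function.update_of_ne (by omega)]
    have hs' : (∑ j ∈ Finset.range (m+1),
        (Function.update x (m+1) v) (j+1) * (Function.update g (m+1) w) j)
        = (∑ j ∈ Finset.range m, x (j+1) * g j) + v * g m := by
      rw [Finset.sum_range_succ, hs m le_rfl, Function.update_self,
        Function.update_of_ne (by omega)]
    first
    | exact hs'
    | simp
    | { intro k hk1 hk2
        rcases Nat.lt_or_ge k (m+1) with hk | hk
        · have hkm : k ≤ m := by omega
          rw [hs k hkm, Function.update_of_ne (by omega),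
            Function.update_of_ne (by omega)]
          exact hchain k hk1 hkm
        · have hkeq : k = m + 1 := by omega
          subst hkeq
          rw [hs', Function.update_self]
          have : m + 1 - 1 = m := by omega
          rw [this, Function.update_of_ne (by omega)]
          exact hnew }
  }

/-- If `F` is recursively-factorable, then for every `n ∈ ℤ` and every
natural `p` with `p ∣ F(n)` there are `m ≥ 1`, integers `x_1, …, x_m` (here `x (j+1)` is
`x_{j+1}`) and integers `g_0 = 1, g_1, …, g_m` such that for each `1 ≤ k ≤ m`,
`F(∑_{j=1}^k x_j · g_{j-1}) = g_{k-1} · g_k`, with `n = ∑_{j=1}^m x_j · g_{j-1}` and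
`p = |g_m|`. -/
theorem stmt_4 (F : Polynomial ℤ) (hF : RecursivelyFactorable F)
    (n : ℤ) (p : ℕ) (hp : (p : ℤ) ∣ F.eval n) :
    ∃ (m : ℕ) (x g : ℕ → ℤ), 1 ≤ m ∧ g 0 = 1 ∧
      (∀ k : ℕ, 1 ≤ k → k ≤ m →
        F.eval (∑ j ∈ Finset.range k, x (j + 1) * g j) = g (k - 1) * g k) ∧
      n = ∑ j ∈ Finset.range m, x (j + 1) * g j ∧
      (p : ℤ) = |g m| := by
  suffices H : ∀ N : ℕ, ∀ n : ℤ, (F.eval n).natAbs = N → ∀ p : ℕ, (p:ℤ) ∣ F.eval n →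
      ∃ (m : ℕ) (x g : ℕ → ℤ), 1 ≤ m ∧ g 0 = 1 ∧
        (∀ k : ℕ, 1 ≤ k → k ≤ m →
          F.eval (∑ j ∈ Finset.range k, x (j + 1) * g j) = g (k - 1) * g k) ∧
        n = ∑ j ∈ Finset.range m, x (j + 1) * g j ∧
        (p : ℤ) = |g m| by
    exact H _ n rfl p hp
  intro N
  induction N using Nat.strong_induction_on with
  | _ N ih =>
  intro n hN p hp
  by_cases h0 : F.eval n = 0
  · -- zero case
    refine ⟨2, (fun j => if j = 1 then n else 0),
      (fun j => if j = 0 then 1 else if j = 1 then 0 else (p:ℤ)), by omega, by norm_num, ?_, ?_, ?_⟩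
    · intro k hk1 hk2
      interval_cases k <;> simp [Finset.sum_range_succ, h0]
    · simp [Finset.sum_range_succ]
    · norm_num
  · obtain ⟨q, hq⟩ := hp
    have hp' : (p:ℤ) ∣ F.eval n := ⟨q, hq⟩
    have hpn0 : p ≠ 0 := by rintro rfl; simp at hq; exact h0 hq
    by_cases hp1 : p = 1
    · subst hp1
      refine ⟨2, (fun j => if j = 1 then n else 0),
        (fun j => if j = 0 then 1 else if j = 1 then F.eval n else 1),
        by omega, by norm_num, ?_, ?_, ?_⟩
      · intro k hk1 hk2
        interval_cases k <;> simp [Finset.sum_range_succ]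
      · simp [Finset.sum_range_succ]
      · norm_num
    by_cases hq1 : |q| = 1
    · refine ⟨1, (fun _ => n), (fun j => if j = 0 then 1 else F.eval n),
        le_rfl, by norm_num, ?_, ?_, ?_⟩
      · intro k hk1 hk2
        interval_cases k; simp [Finset.sum_range_one]
      · simp [Finset.sum_range_one]
      · norm_num
        rw [hq, abs_mul, hq1, mul_one, Int.abs_natCast]
    · have hpabs : |(p:ℤ)| ≠ 1 := by
        rw [Int.abs_natCast]; exact_mod_cast hp1
      obtain ⟨r, hlt, hdvd⟩ := hF n p q hq hpabs hq1
      have h1 : ((F.eval r).natAbs : ℤ) < ((F.eval n).natAbs : ℤ) := by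
        rw [Int.abs_eq_natAbs, Int.abs_eq_natAbs] at hlt; exact hlt
      have hNlt : (F.eval r).natAbs < N := by rw [← hN]; exact_mod_cast h1
      have hsub : (r - n) ∣ F.eval r - F.eval n := Polynomial.sub_dvd_eval_sub r n F
      rcases hdvd with hd | hd
      · -- p ∣ r - n
        have hpr : (p:ℤ) ∣ F.eval r := by
          have h2 : (p:ℤ) ∣ F.eval r - F.eval n := hd.trans hsub
          simpa using dvd_add h2 hp'
        obtain ⟨m, x, g, hm, hg0, hchain, hsum, hgp⟩ := ih _ hNlt r rfl p hpr
        have habs : |g m| = (p:ℤ) := hgp.symm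
        have hgd : ∀ z : ℤ, (p:ℤ) ∣ z → g m ∣ z := by
          intro z hz
          exact (abs_dvd _ _).mp (habs ▸ hz)
        have hd' : (p:ℤ) ∣ n - r := (dvd_sub_comm).mp hd
        have hv : (n - r) / g m * g m = n - r := Int.ediv_mul_cancel (hgd _ hd')
        have hw : F.eval n = g m * (F.eval n / g m) := (Int.mul_ediv_cancel' (hgd _ hp')).symm
        obtain ⟨x1, g1, hg10, hchain1, hsum1, hg1⟩ := extend_chain F m x g hg0 hchain
          ((n - r) / g m) (F.eval n / g m)
          (by rw [← hsum, hv, show r + (n - r) = n by ring]; exact hw)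
        have hsum1' : (∑ j ∈ Finset.range (m+1), x1 (j+1) * g1 j) = n := by
          rw [hsum1, ← hsum, hv]; ring
        obtain ⟨x2, g2, hg20, hchain2, hsum2, hg2⟩ := extend_chain F (m+1) x1 g1 hg10 hchain1
          0 (g m)
          (by rw [hsum1', hg1, zero_mul, add_zero, mul_comm]; exact hw)
        refine ⟨m + 2, x2, g2, by omega, hg20, hchain2, ?_, ?_⟩
        · rw [hsum2, hsum1', hg1]; ring
        · rw [hg2]; exact hgp
      · -- q ∣ r - n
        have hqn0 : q ≠ 0 := by rintro rfl; simp at hq; exact h0 hq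
        have hqFn : q ∣ F.eval n := ⟨p, by rw [hq]; ring⟩
        have hqr : q ∣ F.eval r := by
          have h2 : q ∣ F.eval r - F.eval n := hd.trans hsub
          simpa using dvd_add h2 hqFn
        obtain ⟨m, x, g, hm, hg0, hchain, hsum, hgp⟩ := ih _ hNlt r rfl q.natAbs
          (by rwa [Int.natAbs_dvd])
        have habs : |g m| = |q| := by rw [← hgp, Int.abs_eq_natAbs]
        have hgd : ∀ z : ℤ, q ∣ z → g m ∣ z := by
          intro z hz
          exact (abs_dvd _ _).mp (habs ▸ (abs_dvd q z).mpr hz)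
        have hd' : q ∣ n - r := (dvd_sub_comm).mp hd
        have hv : (n - r) / g m * g m = n - r := Int.ediv_mul_cancel (hgd _ hd')
        have hw : F.eval n = g m * (F.eval n / g m) := (Int.mul_ediv_cancel' (hgd _ hqFn)).symm
        obtain ⟨x1, g1, hg10, hchain1, hsum1, hg1⟩ := extend_chain F m x g hg0 hchain
          ((n - r) / g m) (F.eval n / g m)
          (by rw [← hsum, hv, show r + (n - r) = n by ring]; exact hw)
        refine ⟨m + 1, x1, g1, by omega, hg10, hchain1, ?_, ?_⟩
        · rw [hsum1, ← hsum, hv]; ring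
        · rw [hg1]
          have h3 : |F.eval n| = |g m| * |F.eval n / g m| := by rw [← abs_mul, ← hw]
          have h4 : |F.eval n| = (p:ℤ) * |q| := by
            rw [hq, abs_mul, Int.abs_natCast]
          rw [habs, mul_comm] at h3
          have h5 : |q| ≠ 0 := by simpa using hqn0
          exact mul_right_cancel₀ h5 (by rw [← h4, h3])
end

section
/- Let a, b, c, α, β, γ, δ ∈ ℤ and F(x) = a x² + b x + c. Set η = α γ + b β γ + c β δ, Δ = α δ − a β γ, φ₀ = α² + b α β + a c β², and φ₁ = a γ² + b γ δ + c δ². Then F(η) = φ₀ · φ₁ if and only if Δ = 1 or c·(Δ + 1) + b·η = 0. Equivalently, the polynomial identity F(η) − φ₀ φ₁ = (1 − Δ)·(c Δ + c + b η) holds. -/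
/-- For integers `a b c α β γ δ` and `F(x) = a x² + b x + c`, with
`η = αγ + bβγ + cβδ`, `Δ = αδ − aβγ`, `φ₀ = α² + bαβ + acβ²`, `φ₁ = aγ² + bγδ + cδ²`:
`F(η) = φ₀ · φ₁` if and only if `Δ = 1` or `c(Δ + 1) + bη = 0`; equivalently, the
identity `F(η) − φ₀φ₁ = (1 − Δ)(cΔ + c + bη)` holds. -/
theorem stmt_12 (a b c α β γ δ : ℤ) :
    (a * (α * γ + b * β * γ + c * β * δ) ^ 2 + b * (α * γ + b * β * γ + c * β * δ) + c
        = (α ^ 2 + b * α * β + a * c * β ^ 2) * (a * γ ^ 2 + b * γ * δ + c * δ ^ 2)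
      ↔ (α * δ - a * β * γ = 1 ∨
          c * ((α * δ - a * β * γ) + 1) + b * (α * γ + b * β * γ + c * β * δ) = 0)) ∧
    (a * (α * γ + b * β * γ + c * β * δ) ^ 2 + b * (α * γ + b * β * γ + c * β * δ) + c)
        - (α ^ 2 + b * α * β + a * c * β ^ 2) * (a * γ ^ 2 + b * γ * δ + c * δ ^ 2)
      = (1 - (α * δ - a * β * γ)) *
          (c * (α * δ - a * β * γ) + c + b * (α * γ + b * β * γ + c * β * δ)) := by
  have h2 : (a * (α * γ + b * β * γ + c * β * δ) ^ 2 + b * (α * γ + b * β * γ + c * β * δ) + c)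
        - (α ^ 2 + b * α * β + a * c * β ^ 2) * (a * γ ^ 2 + b * γ * δ + c * δ ^ 2)
      = (1 - (α * δ - a * β * γ)) *
          (c * (α * δ - a * β * γ) + c + b * (α * γ + b * β * γ + c * β * δ)) := by ring
  refine ⟨?_, h2⟩
  rw [show (c * ((α * δ - a * β * γ) + 1) + b * (α * γ + b * β * γ + c * β * δ)
      = c * (α * δ - a * β * γ) + c + b * (α * γ + b * β * γ + c * β * δ)) by ring]
  constructor
  · intro h
    have h3 : (1 - (α * δ - a * β * γ)) *
          (c * (α * δ - a * β * γ) + c + b * (α * γ + b * β * γ + c * β * δ)) = 0 := by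
      rw [← h2]; omega
    rcases mul_eq_zero.mp h3 with h4 | h4
    · left; omega
    · right; exact h4
  · rintro (h | h)
    · have := h2; rw [h] at this; simp at this; omega
    · rw [h, mul_zero] at h2; omega
end

section
/- Let a, b, c ∈ ℤ, F(n) = a n² + b n + c, and let x_1,…,x_m be integers. Define 2×2 integer matrices A_0 = I (the identity matrix) and, for 0 ≤ k ≤ m−1, A_{k+1} = A_k + x_{k+1}·B_k, where, writing A_k = ((α_k, β_k),(γ_k, δ_k)), B_k = ((a γ_k, δ_k),(0, 0)) if k is odd and B_k = ((0, 0),(α_k, a β_k)) if k is even. For a matrix A = ((α, β),(γ, δ)) set Δ[A] = αδ − aβγ, φ₀[A] = α² + bαβ + acβ², φ₁[A] = aγ² + bγδ + cδ², and φ_k[A] = φ₀[A] for even k, φ₁[A] for odd k. Then: (1) Δ[A_m] = 1 for every m; and (2) F(∑_{k=1}^m x_k · φ_{k-1}[A_{k-1}]) = φ_{m-1}[A_{m-1}] · φ_m[A_m]. -/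
/-- Let `F(n) = a n² + b n + c` and `x_1, …, x_m ∈ ℤ` (here `x (k+1)`
is `x_{k+1}`).  Let `A_k = ((α k, β k), (γ k, δ k))` be defined by `A_0 = I` and
`A_{k+1} = A_k + x_{k+1} · B_k`, where `B_k = ((a γ_k, δ_k), (0, 0))` for odd `k` and
`B_k = ((0, 0), (α_k, a β_k))` for even `k`.  With `Δ[A] = αδ − aβγ` and
`φ k = φ₀[A_k] = α_k² + bα_kβ_k + acβ_k²` for even `k`,
`φ k = φ₁[A_k] = aγ_k² + bγ_kδ_k + cδ_k²` for odd `k`, we have: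
(1) `Δ[A_m] = 1` for every `m`; and
(2) for every `m ≥ 1`, `F(∑_{k=1}^m x_k · φ_{k-1}[A_{k-1}]) = φ_{m-1}[A_{m-1}] · φ_m[A_m]`. -/
theorem stmt_14 (a b c : ℤ) (x : ℕ → ℤ) (α β γ δ : ℕ → ℤ)
    (hα0 : α 0 = 1) (hβ0 : β 0 = 0) (hγ0 : γ 0 = 0) (hδ0 : δ 0 = 1)
    (hodd : ∀ k : ℕ, Odd k →
      α (k + 1) = α k + x (k + 1) * (a * γ k) ∧
      β (k + 1) = β k + x (k + 1) * δ k ∧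
      γ (k + 1) = γ k ∧ δ (k + 1) = δ k)
    (heven : ∀ k : ℕ, Even k →
      α (k + 1) = α k ∧ β (k + 1) = β k ∧
      γ (k + 1) = γ k + x (k + 1) * α k ∧
      δ (k + 1) = δ k + x (k + 1) * (a * β k))
    (φ : ℕ → ℤ)
    (hφ : ∀ k : ℕ, φ k = if Even k
      then (α k) ^ 2 + b * (α k) * (β k) + a * c * (β k) ^ 2
      else a * (γ k) ^ 2 + b * (γ k) * (δ k) + c * (δ k) ^ 2) :
    (∀ m : ℕ, α m * δ m - a * β m * γ m = 1) ∧
    (∀ m : ℕ, 1 ≤ m →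
      a * (∑ k ∈ Finset.range m, x (k + 1) * φ k) ^ 2
          + b * (∑ k ∈ Finset.range m, x (k + 1) * φ k) + c
        = φ (m - 1) * φ m) := by
  have key : ∀ m : ℕ, (α m * δ m - a * β m * γ m = 1) ∧
      (α m * γ m + b * β m * γ m + c * β m * δ m
        = ∑ k ∈ Finset.range m, x (k + 1) * φ k) := by
    intro m
    induction m with
    | zero => simp [hα0, hβ0, hγ0, hδ0]
    | succ k ih =>
      obtain ⟨hΔ, hS⟩ := ih
      rcases Nat.even_or_odd k with hk | hk
      · obtain ⟨h1, h2, h3, h4⟩ := heven k hk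
        refine ⟨?_, ?_⟩
        · rw [h1, h2, h3, h4]; linear_combination hΔ
        · rw [Finset.sum_range_succ, ← hS, h1, h2, h3, h4, hφ k, if_pos hk]; ring
      · obtain ⟨h1, h2, h3, h4⟩ := hodd k hk
        refine ⟨?_, ?_⟩
        · rw [h1, h2, h3, h4]; linear_combination hΔ
        · rw [Finset.sum_range_succ, ← hS, h1, h2, h3, h4, hφ k,
            if_neg (Nat.not_even_iff_odd.mpr hk)]
          ring
  refine ⟨fun m => (key m).1, fun m hm => ?_⟩
  cases m with
  | zero => omega
  | succ k =>
    obtain ⟨hΔ, hS⟩ := key (k + 1)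
    rw [← hS]
    simp only [Nat.add_sub_cancel]
    rcases Nat.even_or_odd k with hk | hk
    · obtain ⟨h1, h2, h3, h4⟩ := heven k hk
      rw [hφ k, hφ (k + 1), if_pos hk,
        if_neg (by simp [Nat.even_add_one, hk]), ← h1, ← h2]
      linear_combination -(b * (α (k+1) * γ (k+1) + b * β (k+1) * γ (k+1)
        + c * β (k+1) * δ (k+1)) + c * (α (k+1) * δ (k+1) - a * β (k+1) * γ (k+1) + 1)) * hΔ
    · obtain ⟨h1, h2, h3, h4⟩ := hodd k hk
      rw [hφ k, hφ (k + 1), if_neg (Nat.not_even_iff_odd.mpr hk),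
        if_pos (by simp [Nat.even_add_one, Nat.not_even_iff_odd.mpr hk]), ← h3, ← h4]
      linear_combination -(b * (α (k+1) * γ (k+1) + b * β (k+1) * γ (k+1)
        + c * β (k+1) * δ (k+1)) + c * (α (k+1) * δ (k+1) - a * β (k+1) * γ (k+1) + 1)) * hΔ
end

section
/- Let a, b, c, n, X, Y ∈ ℤ with Y ≠ 0 and a X² + b X Y + c Y² + X − n Y = 0, and let G = gcd(X, Y) (taken positive). Then Y divides G·(1 + a X), and the integers α = G·(1 + a X)/Y, β = G, γ = X/G, δ = Y/G satisfy: (i) α δ − a β γ = 1; (ii) β γ = X and β δ = Y; and (iii) α γ + b β γ + c β δ = n. -/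
/-- Let `(X, Y)` with `Y ≠ 0` be a lattice point of the conic
`a X² + b X Y + c Y² + X − n Y = 0`, and let `G = gcd(X, Y) > 0`.  Then
`Y ∣ G(1 + aX)` and the integers `α = G(1 + aX)/Y`, `β = G`, `γ = X/G`, `δ = Y/G`
satisfy (i) `αδ − aβγ = 1`, (ii) `βγ = X`, `βδ = Y`, and (iii) `αγ + bβγ + cβδ = n`. -/
theorem stmt_18 (a b c n X Y : ℤ) (hY : Y ≠ 0)
    (hconic : a * X ^ 2 + b * X * Y + c * Y ^ 2 + X - n * Y = 0) :
    Y ∣ (Int.gcd X Y : ℤ) * (1 + a * X) ∧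
    ((Int.gcd X Y : ℤ) * (1 + a * X) / Y) * (Y / (Int.gcd X Y : ℤ))
        - a * (Int.gcd X Y : ℤ) * (X / (Int.gcd X Y : ℤ)) = 1 ∧
    (Int.gcd X Y : ℤ) * (X / (Int.gcd X Y : ℤ)) = X ∧
    (Int.gcd X Y : ℤ) * (Y / (Int.gcd X Y : ℤ)) = Y ∧
    ((Int.gcd X Y : ℤ) * (1 + a * X) / Y) * (X / (Int.gcd X Y : ℤ))
        + b * ((Int.gcd X Y : ℤ) * (X / (Int.gcd X Y : ℤ)))
        + c * ((Int.gcd X Y : ℤ) * (Y / (Int.gcd X Y : ℤ))) = n := by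
  set G : ℤ := (Int.gcd X Y : ℤ) with hGdef
  have hG : G ≠ 0 := by
    simp only [hGdef, ne_eq, Int.natCast_eq_zero, Int.gcd_eq_zero_iff]
    tauto
  have hGX : G ∣ X := Int.gcd_dvd_left X Y
  have hGY : G ∣ Y := Int.gcd_dvd_right X Y
  have hXk : X * (1 + a * X) = Y * (n - b * X - c * Y) := by ring_nf; linarith [hconic]
  have hbezout : G = X * Int.gcdA X Y + Y * Int.gcdB X Y := Int.gcd_eq_gcd_ab X Y
  have hdvd : Y ∣ G * (1 + a * X) := by
    have : G * (1 + a * X) =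
        Y * ((n - b * X - c * Y) * Int.gcdA X Y + (1 + a * X) * Int.gcdB X Y) := by
      rw [hbezout]; linear_combination (Int.gcdA X Y) * hXk
    exact ⟨_, this⟩
  have hαY : G * (1 + a * X) / Y * Y = G * (1 + a * X) := Int.ediv_mul_cancel hdvd
  have hβγ : G * (X / G) = X := Int.mul_ediv_cancel' hGX
  have hβδ : G * (Y / G) = Y := Int.mul_ediv_cancel' hGY
  set α : ℤ := G * (1 + a * X) / Y with hα
  have hαδ : α * (Y / G) = 1 + a * X := by
    have h1 : α * (Y / G) * G = (1 + a * X) * G := by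
      calc α * (Y / G) * G = α * (G * (Y / G)) := by ring
        _ = α * Y := by rw [hβδ]
        _ = (1 + a * X) * G := by rw [hαY]; ring
    exact mul_right_cancel₀ hG h1
  have hαγ : α * (X / G) = n - b * X - c * Y := by
    have h1 : α * (X / G) * (G * Y) = (n - b * X - c * Y) * (G * Y) := by
      calc α * (X / G) * (G * Y) = (α * Y) * (G * (X / G)) := by ring
        _ = G * (1 + a * X) * X := by rw [hαY, hβγ]
        _ = G * (X * (1 + a * X)) := by ring
        _ = G * (Y * (n - b * X - c * Y)) := by rw [hXk]
        _ = (n - b * X - c * Y) * (G * Y) := by ring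
    exact mul_right_cancel₀ (mul_ne_zero hG hY) h1
  refine ⟨hdvd, ?_, hβγ, hβδ, ?_⟩
  · rw [show α * (Y / G) - a * G * (X / G) = α * (Y / G) - a * (G * (X / G)) by ring,
      hαδ, hβγ]; ring
  · rw [hαγ, hβγ, hβδ]; ring
end
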